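/- If n is a positive integer and w_1, …, w_n are pairwise coprime positive integers, then there are no w-bubbles. -/

import Mathlib

/-- The weighted dot product `w · u = ∑ i, w i * u i`. -/
def dotW {n : ℕ} (w u : Fin n → ℕ) : ℕ := ∑ i, w i * u i

/-- `d_w`, the least common multiple of the weights. -/
def lcmW {n : ℕ} (w : Fin n → ℕ) : ℕ := Finset.univ.lcm w

/-- `u` is a `w`-bubble: `w · u ≥ 2 d_w` and there is no `v ⪯ u` with `w · v = d_w`. -/
def IsBubble {n : ℕ} (w u : Fin n → ℕ) : Prop :=
  2 * lcmW w ≤ dotW w u ∧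
    ¬ ∃ v : Fin n → ℕ, (∀ i, v i ≤ u i) ∧ dotW w v = lcmW w

open Finset

section Aux
variable {n : ℕ}

lemma dotW_add (w u v : Fin n → ℕ) :
    dotW w (fun k => u k + v k) = dotW w u + dotW w v := by
  unfold dotW
  rw [← Finset.sum_add_distrib]
  exact Finset.sum_congr rfl fun i _ => by ring

lemma dotW_update_succ (w v : Fin n → ℕ) (k : Fin n) :
    dotW w (Function.update v k (v k + 1)) = dotW w v + w k := by
  unfold dotW
  rw [← Finset.add_sum_erase _ _ (Finset.mem_univ k),
      ← Finset.add_sum_erase _ (fun i => w i * v i) (Finset.mem_univ k)]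
  have h2 : ∑ j ∈ Finset.univ.erase k, w j * (Function.update v k (v k + 1)) j
      = ∑ j ∈ Finset.univ.erase k, w j * v j :=
    Finset.sum_congr rfl fun j hj => by
      rw [Function.update_of_ne (Finset.ne_of_mem_erase hj)]
  rw [h2, Function.update_self]
  ring

lemma dotW_ite (w u : Fin n → ℕ) (F : Finset (Fin n)) :
    dotW w (fun k => if k ∈ F then u k else 0) = ∑ k ∈ F, w k * u k := by
  unfold dotW
  have h1 : ∀ k : Fin n, w k * (if k ∈ F then u k else 0) = if k ∈ F then w k * u k else 0 :=
    fun k => by split <;> simp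
  rw [Finset.sum_congr rfl fun k _ => h1 k, Finset.sum_ite_mem, Finset.univ_inter]

lemma dotW_single (w : Fin n → ℕ) (i : Fin n) (c : ℕ) :
    dotW w (fun k => if k = i then c else 0) = w i * c := by
  unfold dotW
  have h1 : ∀ k : Fin n, w k * (if k = i then c else 0) = if k = i then w k * c else 0 :=
    fun k => by split <;> simp
  rw [Finset.sum_congr rfl fun k _ => h1 k, Finset.sum_ite_eq' Finset.univ i fun k => w k * c]
  simp

lemma prod_subset_dvd_lcm (w : Fin n → ℕ)
    (hcop : ∀ i j : Fin n, i ≠ j → Nat.Coprime (w i) (w j)) (s : Finset (Fin n)) :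
    (∏ k ∈ s, w k) ∣ lcmW w := by
  classical
  induction s using Finset.induction_on with
  | empty => simpa using one_dvd _
  | @insert a s ha ih =>
    rw [Finset.prod_insert ha]
    have hco : Nat.Coprime (w a) (∏ k ∈ s, w k) :=
      Nat.Coprime.prod_right fun i hi => hcop a i (fun e => ha (e ▸ hi))
    exact hco.mul_dvd_of_dvd_of_dvd (Finset.dvd_lcm (Finset.mem_univ a)) ih

lemma six_le_mul {a b : ℕ} (hco : Nat.Coprime a b) (ha : 2 ≤ a) (hb : 2 ≤ b) :
    6 ≤ a * b := by
  have hne : a ≠ b := by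
    intro e
    subst e
    have h1 := Nat.gcd_self a
    have h2 : Nat.gcd a a = 1 := hco
    omega
  by_cases h2 : a = 2
  · subst h2
    have : b ≠ 2 := fun e => hne e.symm
    omega
  · have h3 : 3 ≤ a := by omega
    calc (6:ℕ) = 3 * 2 := rfl
      _ ≤ a * b := Nat.mul_le_mul h3 hb

/-- greedy filler lemma -/
lemma filler (w : Fin n → ℕ) :
    ∀ (N : ℕ) (u : Fin n → ℕ), (∑ k, u k) ≤ N → ∀ (Y : ℕ),
    ∃ v : Fin n → ℕ, (∀ k, v k ≤ u k) ∧ dotW w v ≤ Y ∧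
      (∀ k, v k = u k ∨ Y < dotW w v + w k) := by
  intro N
  induction N with
  | zero =>
    intro u hu Y
    refine ⟨u, fun k => le_refl _, ?_, fun k => Or.inl rfl⟩
    have h0 : ∀ k, u k = 0 := by
      intro k
      have := Finset.single_le_sum (f := u) (fun i _ => Nat.zero_le _) (Finset.mem_univ k)
      omega
    have : dotW w u = 0 := Finset.sum_eq_zero fun i _ => by rw [h0 i, mul_zero]
    omega
  | succ N ih =>
    intro u hu Y
    by_cases hstuck : ∀ k, u k = 0 ∨ Y < w k
    · refine ⟨fun _ => 0, fun k => Nat.zero_le _, ?_, ?_⟩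
      · simp [dotW]
      · intro k
        have hz : dotW w (fun _ => (0:ℕ)) = 0 := by simp [dotW]
        rcases hstuck k with h | h
        · exact Or.inl h.symm
        · right; omega
    · push_neg at hstuck
      obtain ⟨k, hk1, hk2⟩ := hstuck
      have hsum' : (∑ j, Function.update u k (u k - 1) j) ≤ N := by
        have h1 : (∑ j, Function.update u k (u k - 1) j) + 1 = ∑ j, u j := by
          rw [← Finset.add_sum_erase _ _ (Finset.mem_univ k),
              ← Finset.add_sum_erase _ u (Finset.mem_univ k)]
          have h2 : ∑ j ∈ Finset.univ.erase k, Function.update u k (u k - 1) j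
              = ∑ j ∈ Finset.univ.erase k, u j :=
            Finset.sum_congr rfl fun j hj => by
              rw [Function.update_of_ne (Finset.ne_of_mem_erase hj)]
          rw [h2, Function.update_self]
          omega
        omega
      obtain ⟨v', hv'le, hv'dot, hv'cond⟩ := ih _ hsum' (Y - w k)
      have hdot := dotW_update_succ w v' k
      refine ⟨Function.update v' k (v' k + 1), ?_, ?_, ?_⟩
      · intro j
        rcases eq_or_ne j k with rfl | hjk
        · have := hv'le j
          rw [Function.update_self] at this ⊢
          omega
        · have := hv'le j
          rw [Function.update_of_ne hjk] at this ⊢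
          exact this
      · omega
      · intro j
        rcases hv'cond j with h | h
        · rcases eq_or_ne j k with rfl | hjk
          · left
            rw [Function.update_self] at h ⊢
            omega
          · left
            rw [Function.update_of_ne hjk] at h ⊢
            exact h
        · right; omega

lemma ones_fill (w u : Fin n → ℕ) (s : Finset (Fin n)) (h1 : ∀ k ∈ s, w k = 1)
    (t : ℕ) (ht : t ≤ ∑ k ∈ s, u k) :
    ∃ v : Fin n → ℕ, (∀ k, v k ≤ u k) ∧ (∀ k, k ∉ s → v k = 0) ∧ dotW w v = t := by
  classical
  set uO : Fin n → ℕ := fun k => if k ∈ s then u k else 0 with huO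
  obtain ⟨v, hvle, hvdot, hvcond⟩ := filler w (∑ k, uO k) uO le_rfl t
  have hvz : ∀ k, k ∉ s → v k = 0 := by
    intro k hk
    have := hvle k
    simp only [huO, if_neg hk] at this
    omega
  have hdotO : dotW w uO = ∑ k ∈ s, u k := by
    rw [show dotW w uO = ∑ k ∈ s, w k * u k from dotW_ite w u s]
    exact Finset.sum_congr rfl fun k hk => by rw [h1 k hk, one_mul]
  refine ⟨v, ?_, hvz, ?_⟩
  · intro k
    have := hvle k
    by_cases hk : k ∈ s
    · simpa [huO, if_pos hk] using this
    · simp only [huO, if_neg hk] at this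
      omega
  · rcases eq_or_lt_of_le hvdot with h | hlt
    · exact h
    exfalso
    have hveq : ∀ k, v k = uO k := by
      intro k
      by_cases hk : k ∈ s
      · rcases hvcond k with h | h
        · exact h
        · rw [h1 k hk] at h
          omega
      · have := hvle k
        simp only [huO, if_neg hk] at this ⊢
        omega
    have heq : dotW w v = dotW w uO :=
      Finset.sum_congr rfl fun k _ => by rw [hveq k]
    omega

lemma pair_rep (a b T α β : ℕ) (hco : Nat.Coprime a b) (ha : 1 ≤ a) (hb : 2 ≤ b)
    (hT : a * b ≤ T) (hcap : T + a * b ≤ a * α + b * β) (hα : b ≤ α) (hβ : a ≤ β) :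
    ∃ x y : ℕ, x ≤ α ∧ y ≤ β ∧ a * x + b * y = T := by
  obtain ⟨c, -, hc⟩ := Nat.exists_mul_mod_eq_one_of_coprime hco (by omega)
  set x₀ := (c * T) % b with hx₀
  have hx₀lt : x₀ < b := Nat.mod_lt _ (by omega)
  have hmod : a * x₀ ≡ T [MOD b] := by
    have h1 : x₀ ≡ c * T [MOD b] := Nat.mod_modEq (c * T) b
    have h2 : a * x₀ ≡ a * (c * T) [MOD b] := h1.mul_left a
    have h3 : a * c ≡ 1 [MOD b] := by
      unfold Nat.ModEq
      rw [hc, Nat.mod_eq_of_lt (by omega)]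
    have h4 : (a * c) * T ≡ 1 * T [MOD b] := h3.mul_right T
    have h5 : a * (c * T) = (a * c) * T := by ring
    rw [h5] at h2
    calc a * x₀ ≡ (a * c) * T [MOD b] := h2
      _ ≡ 1 * T [MOD b] := h4
      _ = T := one_mul T
  have hax₀ : a * x₀ + a ≤ T := by
    have h6 : a * x₀ + a = a * (x₀ + 1) := by ring
    rw [h6]
    calc a * (x₀ + 1) ≤ a * b := Nat.mul_le_mul_left a (by omega)
      _ ≤ T := hT
  have hdvd : b ∣ T - a * x₀ := (Nat.modEq_iff_dvd' (by omega)).mp hmod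
  obtain ⟨K, hKdef⟩ := hdvd
  have hK : a * x₀ + b * K = T := by omega
  have hx₀α : x₀ ≤ α := by omega
  obtain ⟨e, he⟩ : ∃ e, x₀ + e = α := ⟨α - x₀, by omega⟩
  set t₁ := e / b with ht₁
  set t₂ := K / a with ht₂
  have hsplit₁ : b * t₁ + e % b = e := by
    rw [ht₁]; exact Nat.div_add_mod e b
  have hm₁ : e % b < b := Nat.mod_lt e (show 0 < b by omega)
  have hsplit₂ : a * t₂ + K % a = K := by
    rw [ht₂]; exact Nat.div_add_mod K a
  have hm₂ : K % a < a := Nat.mod_lt K (show 0 < a by omega)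
  have hbt₁ : b * t₁ ≤ e ∧ e < b * t₁ + b := by omega
  have hat₂ : a * t₂ ≤ K ∧ K < a * t₂ + a := by omega
  by_cases hcase : t₂ ≤ t₁
  · obtain ⟨y, hy⟩ : ∃ y, a * t₂ + y = K := ⟨K - a * t₂, by omega⟩
    refine ⟨x₀ + b * t₂, y, ?_, by omega, ?_⟩
    · have : b * t₂ ≤ b * t₁ := Nat.mul_le_mul_left b hcase
      omega
    · have E2 : a * b * t₂ + b * y = b * K := by
        calc a * b * t₂ + b * y = b * (a * t₂ + y) := by ring
          _ = b * K := by rw [hy]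
      calc a * (x₀ + b * t₂) + b * y = a * x₀ + (a * b * t₂ + b * y) := by ring
        _ = a * x₀ + b * K := by rw [E2]
        _ = T := hK
  · push_neg at hcase
    have hat₁K : a * t₁ ≤ K := by
      have h6 : a * t₁ ≤ a * t₂ := Nat.mul_le_mul_left a (by omega)
      omega
    obtain ⟨y, hy⟩ : ∃ y, a * t₁ + y = K := ⟨K - a * t₁, by omega⟩
    have E2 : a * b * t₁ + b * y = b * K := by
      calc a * b * t₁ + b * y = b * (a * t₁ + y) := by ring
        _ = b * K := by rw [hy]
    have heq : a * (x₀ + b * t₁) + b * y = T := by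
      calc a * (x₀ + b * t₁) + b * y = a * x₀ + (a * b * t₁ + b * y) := by ring
        _ = a * x₀ + b * K := by rw [E2]
        _ = T := hK
    refine ⟨x₀ + b * t₁, y, by omega, ?_, heq⟩
    have hmul : a * e + a ≤ a * b * t₁ + a * b := by
      have h7 : e + 1 ≤ b * t₁ + b := by omega
      calc a * e + a = a * (e + 1) := by ring
        _ ≤ a * (b * t₁ + b) := Nat.mul_le_mul_left a h7
        _ = a * b * t₁ + a * b := by ring
    have hae : a * x₀ + a * e = a * α := by
      calc a * x₀ + a * e = a * (x₀ + e) := by ring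
        _ = a * α := by rw [he]
    have hblt : b * y + a ≤ b * β := by omega
    have hyβ : y < β := by
      have h8 : b * y < b * β := by omega
      exact lt_of_mul_lt_mul_left h8 (Nat.zero_le b)
    omega

end Aux

set_option maxHeartbeats 2000000 in
theorem no_bubble_of_pairwise_coprime {n : ℕ} (hn : 0 < n) (w : Fin n → ℕ)
    (hw : ∀ i, 0 < w i) (hcop : ∀ i j : Fin n, i ≠ j → Nat.Coprime (w i) (w j)) :
    ¬ ∃ u : Fin n → ℕ, IsBubble w u := by
  classical
  rintro ⟨u, hS, hno⟩
  apply hno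
  set d := lcmW w with hd
  have hdvd : ∀ i, w i ∣ d := fun i => Finset.dvd_lcm (Finset.mem_univ i)
  have hdpos : 0 < d := by
    rcases Nat.eq_zero_or_pos d with h | h
    · exfalso
      rw [hd, lcmW, Finset.lcm_eq_zero_iff] at h
      obtain ⟨i, _, hi⟩ := h
      have := hw i
      omega
    · exact h
  by_cases hbig : ∃ i, d ≤ w i * u i
  · obtain ⟨i, hi⟩ := hbig
    refine ⟨fun k => if k = i then d / w i else 0, ?_, ?_⟩
    · intro k
      by_cases hk : k = i
      · subst hk
        simp only [if_pos rfl]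
        have h1 : d / w k ≤ (w k * u k) / w k := Nat.div_le_div_right hi
        rwa [Nat.mul_div_cancel_left _ (hw k)] at h1
      · simp [hk]
    · rw [dotW_single w i (d / w i), Nat.mul_div_cancel' (hdvd i)]
  push_neg at hbig
  have hxle : ∀ i, w i * u i + w i ≤ d := by
    intro i
    have hh : d = w i * (d / w i) := (Nat.mul_div_cancel' (hdvd i)).symm
    have h1 : u i < d / w i := by
      have h2 := hbig i
      rw [hh] at h2
      exact lt_of_mul_lt_mul_left h2 (Nat.zero_le _)
    calc w i * u i + w i = w i * (u i + 1) := by ring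
      _ ≤ w i * (d / w i) := Nat.mul_le_mul_left _ h1
      _ = d := (Nat.mul_div_cancel' (hdvd i))
  set O : Finset (Fin n) := Finset.univ.filter (fun k => w k = 1) with hO
  set m := ∑ k ∈ O, u k with hm
  have hOw : ∀ k ∈ O, w k = 1 := fun k hk => (Finset.mem_filter.mp hk).2
  by_cases hones : d ≤ m
  · obtain ⟨v, hvle, _, hvdot⟩ := ones_fill w u O hOw d hones
    exact ⟨v, hvle, hvdot⟩
  push_neg at hones
  set R : Finset (Fin n) := Finset.univ.filter (fun k => w k ≠ 1 ∧ u k ≠ 0) with hR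
  have hwR : ∀ k ∈ R, 2 ≤ w k := fun k hk => by
    have h1 := (Finset.mem_filter.mp hk).2.1
    have h2 := hw k
    omega
  have huR : ∀ k ∈ R, 1 ≤ u k := fun k hk => by
    have := (Finset.mem_filter.mp hk).2.2
    omega
  set X : Finset (Fin n) := Finset.univ.filter (fun k => ¬ w k = 1) with hX
  have hXR : ∑ k ∈ R, w k * u k = ∑ k ∈ X, w k * u k := by
    apply Finset.sum_subset
    · intro x hx
      simp only [hR, hX, Finset.mem_filter] at hx ⊢
      exact ⟨hx.1, hx.2.1⟩
    · intro x hx hnx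
      simp only [hR, hX, Finset.mem_filter] at hx hnx
      have : u x = 0 := by
        by_contra hc
        exact hnx ⟨hx.1, hx.2, hc⟩
      rw [this, mul_zero]
  have hsplitX : dotW w u = m + ∑ k ∈ X, w k * u k := by
    have h1 := Finset.sum_filter_add_sum_filter_not Finset.univ (fun k => w k = 1)
      (fun k => w k * u k)
    have h2 : ∑ k ∈ Finset.univ.filter (fun k => w k = 1), w k * u k = m := by
      rw [hm]
      exact Finset.sum_congr rfl fun k hk => by rw [hOw k hk, one_mul]
    rw [← h2]
    exact h1.symm
  have hsplitS : dotW w u = m + ∑ k ∈ R, w k * u k := by rw [hXR]; exact hsplitX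
  have hRne : R.Nonempty := by
    rcases Finset.eq_empty_or_nonempty R with h | h
    · exfalso
      rw [h, Finset.sum_empty] at hsplitS
      omega
    · exact h
  obtain ⟨i₁, hhR, hhmax⟩ := R.exists_max_image (fun k => w k * u k) hRne
  by_cases h2a : w i₁ ≤ m + 1
  · -- CASE 2a
    have hw2 : 2 ≤ w i₁ := hwR i₁ hhR
    have hu1 : 1 ≤ u i₁ := huR i₁ hhR
    have hi₁X : i₁ ∈ X := by
      simp only [hX, Finset.mem_filter]
      exact ⟨Finset.mem_univ _, (Finset.mem_filter.mp hhR).2.1⟩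
    set F : Finset (Fin n) := X.erase i₁ with hF
    set uF : Fin n → ℕ := fun k => if k ∈ F then u k else 0 with huF
    have huFle : (∑ k, uF k) ≤ ∑ k, u k := Finset.sum_le_sum fun k _ => by
      by_cases hk : k ∈ F
      · simp [huF, hk]
      · simp [huF, hk]
    obtain ⟨v₀, hv₀le, hv₀dot, hv₀cond⟩ := filler w (∑ k, u k) uF huFle d
    have hFsum : w i₁ * u i₁ + ∑ k ∈ F, w k * u k = ∑ k ∈ X, w k * u k := by
      rw [hF]
      exact Finset.add_sum_erase X (fun k => w k * u k) hi₁X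
    have hTbound : d ≤ dotW w v₀ + (w i₁ * u i₁ + m) := by
      by_cases hex : ∃ k, v₀ k ≠ uF k
      · obtain ⟨k, hk⟩ := hex
        have hcondk := (hv₀cond k).resolve_left hk
        have hkF : k ∈ F ∧ u k ≠ 0 := by
          have h5 := hv₀le k
          by_cases hkF : k ∈ F
          · refine ⟨hkF, ?_⟩
            simp only [huF, if_pos hkF] at h5 hk
            omega
          · exfalso
            simp only [huF, if_neg hkF] at h5 hk
            omega
        have hkR : k ∈ R := by
          have hkX : k ∈ X := Finset.mem_of_mem_erase hkF.1
          simp only [hX, Finset.mem_filter] at hkX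
          simp only [hR, Finset.mem_filter]
          exact ⟨Finset.mem_univ _, hkX.2, hkF.2⟩
        have h5 : w k ≤ w k * u k := Nat.le_mul_of_pos_right _ (by have := huR k hkR; omega)
        have h6 : w k * u k ≤ w i₁ * u i₁ := hhmax k hkR
        omega
      · push_neg at hex
        have hD0 : dotW w v₀ = ∑ k ∈ F, w k * u k := by
          have h7 : dotW w v₀ = dotW w uF :=
            Finset.sum_congr rfl fun k _ => by rw [hex k]
          rw [h7, huF, dotW_ite]
        omega
    have hvhlf : ∃ vh lf, vh ≤ u i₁ ∧ lf ≤ m ∧ w i₁ * vh + lf = d - dotW w v₀ := by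
      set T := d - dotW w v₀ with hT
      have hdm := Nat.div_add_mod T (w i₁)
      rcases le_or_gt (T / w i₁) (u i₁) with hc | hc
      · refine ⟨T / w i₁, T % w i₁, hc, ?_, by omega⟩
        have := Nat.mod_lt T (show 0 < w i₁ by omega)
        omega
      · have h7 : w i₁ * (u i₁ + 1) ≤ w i₁ * (T / w i₁) := Nat.mul_le_mul_left _ (by omega)
        have h9 : w i₁ * (u i₁ + 1) = w i₁ * u i₁ + w i₁ := by ring
        have h8 : w i₁ * (T / w i₁) ≤ T := by
          rw [mul_comm]
          exact Nat.div_mul_le_self T (w i₁)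
        refine ⟨u i₁, T - w i₁ * u i₁, le_rfl, by omega, by omega⟩
    obtain ⟨vh, lf, hvh, hlf, heqT⟩ := hvhlf
    obtain ⟨v₁, hv₁le, hv₁z, hv₁dot⟩ := ones_fill w u O hOw lf (by rw [← hm]; omega)
    refine ⟨fun k => v₀ k + (v₁ k + (if k = i₁ then vh else 0)), ?_, ?_⟩
    · intro k
      show v₀ k + (v₁ k + (if k = i₁ then vh else 0)) ≤ u k
      by_cases hk1 : k = i₁
      · subst hk1
        have h9 : v₀ k ≤ uF k := hv₀le k
        have h10 : uF k = 0 := by simp [huF, hF, Finset.notMem_erase]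
        have h11 : v₁ k = 0 := by
          apply hv₁z
          simp only [hO, Finset.mem_filter]
          rintro ⟨-, hk⟩
          omega
        have h12 : (if k = k then vh else 0) = vh := by simp
        rw [h12]
        omega
      · by_cases hk2 : k ∈ O
        · have h9 : v₀ k ≤ uF k := hv₀le k
          have h10 : uF k = 0 := by
            have hkX : k ∉ X := by
              simp only [hX, Finset.mem_filter]
              have := hOw k hk2
              tauto
            have : k ∉ F := fun hc => hkX (Finset.mem_of_mem_erase hc)
            simp [huF, this]
          have h11 := hv₁le k
          simp only [if_neg hk1]
          omega
        · have h11 : v₁ k = 0 := hv₁z k hk2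
          have h9 : v₀ k ≤ uF k := hv₀le k
          have h10 : uF k ≤ u k := by
            by_cases hkF : k ∈ F
            · simp [huF, hkF]
            · simp [huF, hkF]
          simp only [if_neg hk1]
          omega
    · rw [dotW_add w v₀ (fun k => v₁ k + (if k = i₁ then vh else 0)),
          dotW_add w v₁ (fun k => if k = i₁ then vh else 0),
          dotW_single w i₁ vh, hv₁dot]
      omega
  · -- CASE 2b
    push_neg at h2a
    have hw2 : 2 ≤ w i₁ := hwR i₁ hhR
    have hu1 : 1 ≤ u i₁ := huR i₁ hhR
    set R' : Finset (Fin n) := R.erase i₁ with hR'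
    have hRsum : w i₁ * u i₁ + ∑ k ∈ R', w k * u k = ∑ k ∈ R, w k * u k := by
      rw [hR']
      exact Finset.add_sum_erase R (fun k => w k * u k) hhR
    have hR'ne : R'.Nonempty := by
      rcases Finset.eq_empty_or_nonempty R' with h | h
      · exfalso
        have h0 : ∑ k ∈ R', w k * u k = 0 := by rw [h]; exact Finset.sum_empty
        have h1 := hxle i₁
        omega
      · exact h
    obtain ⟨g, hgR', hgmax⟩ := R'.exists_max_image (fun k => w k * u k) hR'ne
    have hgR'' : g ∈ R.erase i₁ := by rw [← hR']; exact hgR'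
    have hgR : g ∈ R := Finset.mem_of_mem_erase hgR''
    have hgh : g ≠ i₁ := Finset.ne_of_mem_erase hgR''
    have hwg2 : 2 ≤ w g := hwR g hgR
    have hug1 : 1 ≤ u g := huR g hgR
    have hco : Nat.Coprime (w i₁) (w g) := hcop i₁ g (fun e => hgh e.symm)
    have hsum' : d + 2 ≤ ∑ k ∈ R', w k * u k := by
      have h1 := hxle i₁
      omega
    have hcard : ∑ k ∈ R', w k * u k ≤ R'.card * (w g * u g) := by
      calc ∑ k ∈ R', w k * u k ≤ R'.card • (w g * u g) :=
            Finset.sum_le_card_nsmul _ _ _ hgmax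
        _ = R'.card * (w g * u g) := by simp
    have hprod1 : w g * ∏ k ∈ R'.erase g, w k = ∏ k ∈ R', w k :=
      Finset.mul_prod_erase R' w hgR'
    have hprod2 : w i₁ * ∏ k ∈ R', w k = ∏ k ∈ R, w k := by
      rw [hR']
      exact Finset.mul_prod_erase R w hhR
    have hprodd : (∏ k ∈ R, w k) ∣ d := by
      rw [hd]
      exact prod_subset_dvd_lcm w hcop R
    have hprodled : (∏ k ∈ R, w k) ≤ d := Nat.le_of_dvd hdpos hprodd
    have hpow : 2 ^ (R'.erase g).card ≤ ∏ k ∈ R'.erase g, w k :=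
      Finset.pow_card_le_prod _ _ _ (fun k hk =>
        hwR k (Finset.mem_of_mem_erase (by rw [← hR']; exact Finset.mem_of_mem_erase hk)))
    have hcarderase : (R'.erase g).card + 1 = R'.card := Finset.card_erase_add_one hgR'
    have hcardle : R'.card ≤ 2 ^ (R'.erase g).card := by
      have := Nat.lt_two_pow_self (n := (R'.erase g).card)
      omega
    have hcardpos : 1 ≤ R'.card := Finset.card_pos.mpr hR'ne
    have habd : R'.card * (w i₁ * w g) ≤ d := by
      have h1 : R'.card * (w i₁ * w g) ≤ 2 ^ (R'.erase g).card * (w i₁ * w g) :=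
        mul_le_mul_left hcardle _
      have h2 : 2 ^ (R'.erase g).card * (w i₁ * w g)
          ≤ (∏ k ∈ R'.erase g, w k) * (w i₁ * w g) := mul_le_mul_left hpow _
      have h3 : (∏ k ∈ R'.erase g, w k) * (w i₁ * w g) = ∏ k ∈ R, w k := by
        rw [← hprod2, ← hprod1]
        ring
      omega
    have hKEY1 : w i₁ * w g < w g * u g := by
      have h6 : R'.card * (w i₁ * w g) < R'.card * (w g * u g) := by omega
      exact lt_of_mul_lt_mul_left h6 (Nat.zero_le _)
    have hxh_ge : w g * u g ≤ w i₁ * u i₁ := hhmax g hgR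
    have hcap1 : w g ≤ u i₁ := by
      have h7 : w i₁ * w g < w i₁ * u i₁ := lt_of_lt_of_le hKEY1 hxh_ge
      have h8 := lt_of_mul_lt_mul_left h7 (Nat.zero_le (w i₁))
      omega
    have hcap2 : w i₁ ≤ u g := by
      have h7 : w g * w i₁ < w g * u g := by
        have h8 : w g * w i₁ = w i₁ * w g := mul_comm _ _
        omega
      have h8 := lt_of_mul_lt_mul_left h7 (Nat.zero_le (w g))
      omega
    have habled : w i₁ * w g ≤ d := by
      have h1 : 1 * (w i₁ * w g) ≤ R'.card * (w i₁ * w g) := mul_le_mul_left hcardpos _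
      omega
    set F : Finset (Fin n) := Finset.univ.filter (fun k => k ≠ i₁ ∧ k ≠ g) with hF
    set uF : Fin n → ℕ := fun k => if k ∈ F then u k else 0 with huF
    have huFle : (∑ k, uF k) ≤ ∑ k, u k := Finset.sum_le_sum fun k _ => by
      by_cases hk : k ∈ F
      · simp [huF, hk]
      · simp [huF, hk]
    obtain ⟨v₀, hv₀le, hv₀dot, hv₀cond⟩ := filler w (∑ k, u k) uF huFle (d - w i₁ * w g)
    have hFsplit : dotW w u = (∑ k ∈ F, w k * u k) + (w i₁ * u i₁ + w g * u g) := by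
      have h1 := Finset.sum_filter_add_sum_filter_not Finset.univ
        (fun k => k ≠ i₁ ∧ k ≠ g) (fun k => w k * u k)
      have h2 : Finset.univ.filter (fun k => ¬(k ≠ i₁ ∧ k ≠ g)) = {i₁, g} := by
        ext x
        simp only [Finset.mem_filter, Finset.mem_univ, true_and, Finset.mem_insert,
          Finset.mem_singleton]
        tauto
      have h3 : ∑ k ∈ ({i₁, g} : Finset (Fin n)), w k * u k
          = w i₁ * u i₁ + w g * u g := Finset.sum_pair (fun e => hgh e.symm)
      rw [h2, h3] at h1
      rw [← hF] at h1
      exact h1.symm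
    have hT1 : w i₁ * w g + dotW w v₀ ≤ d := by omega
    have hKEY2 : (d - dotW w v₀) + w i₁ * w g ≤ w i₁ * u i₁ + w g * u g := by
      by_cases hex : ∃ k, v₀ k ≠ uF k
      · obtain ⟨k, hk⟩ := hex
        have hcondk := (hv₀cond k).resolve_left hk
        have hkF : k ∈ F ∧ u k ≠ 0 := by
          have h5 := hv₀le k
          by_cases hkF' : k ∈ F
          · refine ⟨hkF', ?_⟩
            simp only [huF, if_pos hkF'] at h5 hk
            omega
          · exfalso
            simp only [huF, if_neg hkF'] at h5 hk
            omega
        have hki₁ : k ≠ i₁ := by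
          have := Finset.mem_filter.mp (hF ▸ hkF.1)
          exact this.2.1
        have hkg : k ≠ g := by
          have := Finset.mem_filter.mp (hF ▸ hkF.1)
          exact this.2.2
        rcases le_or_gt (w k) 3 with h3 | h4
        · omega
        · have hkR : k ∈ R := by
            simp only [hR, Finset.mem_filter]
            refine ⟨Finset.mem_univ _, by omega, hkF.2⟩
          have hkR' : k ∈ R' := by
            rw [hR']
            exact Finset.mem_erase.mpr ⟨hki₁, hkR⟩
          have hkRg : k ∈ R'.erase g := Finset.mem_erase.mpr ⟨hkg, hkR'⟩
          set Q := ∏ j ∈ (R'.erase g).erase k, w j with hQ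
          have hq1 : w k * Q = ∏ j ∈ R'.erase g, w j := by
            rw [hQ]
            exact Finset.mul_prod_erase _ w hkRg
          have hd1 : w i₁ * w g * (w k * Q) = ∏ j ∈ R, w j := by
            rw [hq1, ← hprod2, ← hprod1]
            ring
          have hd2 : w i₁ * w g * (w k * Q) ≤ d := by omega
          have hsix : 6 ≤ w i₁ * w g := six_le_mul hco hw2 hwg2
          have h41 : 4 * (w i₁ * w g * Q) ≤ d := by
            calc 4 * (w i₁ * w g * Q) ≤ w k * (w i₁ * w g * Q) :=
                  mul_le_mul_left (by omega) _
              _ = w i₁ * w g * (w k * Q) := by ring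
              _ ≤ d := hd2
          have h61 : 6 * (Q * w k) ≤ d := by
            calc 6 * (Q * w k) ≤ (w i₁ * w g) * (Q * w k) := mul_le_mul_left hsix _
              _ = w i₁ * w g * (w k * Q) := by ring
              _ ≤ d := hd2
          have hkcard : ((R'.erase g).erase k).card + 1 = (R'.erase g).card :=
            Finset.card_erase_add_one hkRg
          have hQpow : 2 ^ ((R'.erase g).erase k).card ≤ Q := by
            rw [hQ]
            exact Finset.pow_card_le_prod _ _ _ (fun j hj =>
              hwR j (Finset.mem_of_mem_erase (by
                rw [← hR']
                exact Finset.mem_of_mem_erase (Finset.mem_of_mem_erase hj))))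
          have hc2 : R'.card ≤ 3 * Q := by
            have p1 := Nat.lt_two_pow_self (n := ((R'.erase g).erase k).card)
            have p2 : 1 ≤ 2 ^ ((R'.erase g).erase k).card := Nat.one_le_two_pow
            omega
          have hTb : (d - dotW w v₀) + w i₁ * w g ≤ 2 * (w i₁ * w g) + w k := by omega
          have hbig1 : R'.card * ((d - dotW w v₀) + w i₁ * w g) ≤ 2 * d := by
            calc R'.card * ((d - dotW w v₀) + w i₁ * w g)
                ≤ (3 * Q) * (2 * (w i₁ * w g) + w k) := Nat.mul_le_mul hc2 hTb
              _ = 6 * (w i₁ * w g * Q) + 3 * (Q * w k) := by ring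
              _ ≤ 2 * d := by omega
          have hbig2 : 2 * d + 4 ≤ R'.card * (2 * (w g * u g)) := by
            have h9 : R'.card * (2 * (w g * u g)) = 2 * (R'.card * (w g * u g)) := by ring
            omega
          have h9 : R'.card * ((d - dotW w v₀) + w i₁ * w g)
              < R'.card * (2 * (w g * u g)) := by omega
          have h10 : (d - dotW w v₀) + w i₁ * w g < 2 * (w g * u g) :=
            lt_of_mul_lt_mul_left h9 (Nat.zero_le _)
          omega
      · push_neg at hex
        have hD0 : dotW w v₀ = ∑ k ∈ F, w k * u k := by
          have h7 : dotW w v₀ = dotW w uF :=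
            Finset.sum_congr rfl fun k _ => by rw [hex k]
          rw [h7, huF, dotW_ite]
        omega
    obtain ⟨xx, yy, hxx, hyy, hpair⟩ := pair_rep (w i₁) (w g) (d - dotW w v₀) (u i₁) (u g)
      hco (by omega) hwg2 (by omega) hKEY2 hcap1 hcap2
    refine ⟨fun k => v₀ k + ((if k = i₁ then xx else 0) + (if k = g then yy else 0)), ?_, ?_⟩
    · intro k
      show v₀ k + ((if k = i₁ then xx else 0) + (if k = g then yy else 0)) ≤ u k
      have h9 : v₀ k ≤ uF k := hv₀le k
      by_cases hk1 : k = i₁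
      · subst hk1
        have h10 : uF k = 0 := by
          have hkF : k ∉ F := by
            rw [hF]
            simp only [Finset.mem_filter]
            tauto
          simp [huF, hkF]
        have h11 : (if k = k then xx else 0) = xx := by simp
        have h12 : (if k = g then yy else 0) = 0 := by
          rw [if_neg (fun e => hgh e.symm)]
        rw [h11, h12]
        omega
      · by_cases hk2 : k = g
        · subst hk2
          have h10 : uF k = 0 := by
            have hkF : k ∉ F := by
              rw [hF]
              simp only [Finset.mem_filter]
              tauto
            simp [huF, hkF]
          have h11 : (if k = i₁ then xx else 0) = 0 := by rw [if_neg hk1]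
          have h12 : (if k = k then yy else 0) = yy := by simp
          rw [h11, h12]
          omega
        · have h10 : uF k ≤ u k := by
            by_cases hkF : k ∈ F
            · simp [huF, hkF]
            · simp [huF, hkF]
          rw [if_neg hk1, if_neg hk2]
          omega
    · rw [dotW_add w v₀ (fun k => (if k = i₁ then xx else 0) + (if k = g then yy else 0)),
          dotW_add w (fun k => if k = i₁ then xx else 0) (fun k => if k = g then yy else 0),
          dotW_single w i₁ xx, dotW_single w g yy]
      omega
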